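/- Equip P = k[x₁,x₂,x₃] with the Poisson bracket {x₁,x₂} = 0, {x₂,x₃} = 3x₁², {x₃,x₁} = 0. Fix a, d ∈ k and let φ be the graded Poisson automorphism with φ(x₁) = −x₁, φ(x₂) = a·x₁ + x₂, φ(x₃) = d·x₁ + x₃, and let G = ⟨φ⟩. Then the invariant subalgebra P^G equals the k-subalgebra generated by y₁ = x₁², y₂ = (a/2)x₁ + x₂, y₃ = (d/2)x₁ + x₃, and these generators satisfy {y₁,y₂} = 0, {y₂,y₃} = 3y₁, {y₃,y₁} = 0. -/

import Mathlib

open MvPolynomial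

set_option linter.unusedVariables false
set_option maxRecDepth 8000


/-- The bracket on `k[x₁,x₂,x₃]` determined by the values `p12 = {x₁,x₂}`, `p23 = {x₂,x₃}`,
`p31 = {x₃,x₁}` via `{f,g} = Σ_{i<j} (∂f/∂xᵢ·∂g/∂xⱼ − ∂f/∂xⱼ·∂g/∂xᵢ)·{xᵢ,xⱼ}`. -/
noncomputable def jacBracket {k : Type*} [Field k] (p12 p23 p31 : MvPolynomial (Fin 3) k)
    (f g : MvPolynomial (Fin 3) k) : MvPolynomial (Fin 3) k :=
  (pderiv 0 f * pderiv 1 g - pderiv 1 f * pderiv 0 g) * p12 +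
    (pderiv 1 f * pderiv 2 g - pderiv 2 f * pderiv 1 g) * p23 +
    (pderiv 2 f * pderiv 0 g - pderiv 0 f * pderiv 2 g) * p31



noncomputable def sgA {k : Type*} [Field k] :
    MvPolynomial (Fin 3) k →ₐ[k] MvPolynomial (Fin 3) k :=
  aeval ![-X 0, X 1, X 2]

noncomputable def TmA {k : Type*} [Field k] (a d : k) :
    MvPolynomial (Fin 3) k →ₐ[k] MvPolynomial (Fin 3) k :=
  aeval ![X 0, C (a/2) * X 0 + X 1, C (d/2) * X 0 + X 2]

noncomputable def TmA' {k : Type*} [Field k] (a d : k) :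
    MvPolynomial (Fin 3) k →ₐ[k] MvPolynomial (Fin 3) k :=
  aeval ![X 0, -(C (a/2) * X 0) + X 1, -(C (d/2) * X 0) + X 2]

lemma TmA_comp {k : Type*} [Field k] (a d : k) :
    (TmA a d).comp (TmA' a d) = AlgHom.id k (MvPolynomial (Fin 3) k) := by
  apply MvPolynomial.algHom_ext
  intro i
  fin_cases i <;> simp [TmA, TmA']

lemma TmA'_comp {k : Type*} [Field k] (a d : k) :
    (TmA' a d).comp (TmA a d) = AlgHom.id k (MvPolynomial (Fin 3) k) := by
  apply MvPolynomial.algHom_ext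
  intro i
  fin_cases i <;> simp [TmA, TmA']

lemma phi_eq_aux {k : Type*} [Field k] [CharZero k] (a d : k)
    (φ : MvPolynomial (Fin 3) k ≃ₐ[k] MvPolynomial (Fin 3) k)
    (hφ0 : φ (X 0) = -X 0)
    (hφ1 : φ (X 1) = C a * X 0 + X 1)
    (hφ2 : φ (X 2) = C d * X 0 + X 2) (f : MvPolynomial (Fin 3) k) :
    φ f = TmA a d (sgA (TmA' a d f)) := by
  have h : (φ : MvPolynomial (Fin 3) k →ₐ[k] MvPolynomial (Fin 3) k)
      = ((TmA a d).comp sgA).comp (TmA' a d) := by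
    apply MvPolynomial.algHom_ext
    intro i
    fin_cases i
    · simp [TmA, TmA', sgA, hφ0]
    · simp [TmA, TmA', sgA, hφ1]
      rw [show (C a : MvPolynomial (Fin 3) k) = C (a/2) + C (a/2) by
        rw [← C_add, add_halves]]
      ring
    · simp [TmA, TmA', sgA, hφ2]
      rw [show (C d : MvPolynomial (Fin 3) k) = C (d/2) + C (d/2) by
        rw [← C_add, add_halves]]
      ring
  simpa using DFunLike.congr_fun h f

lemma monomial_eq3 {k : Type*} [Field k] (m : Fin 3 →₀ ℕ) (c : k) :
    (monomial m c : MvPolynomial (Fin 3) k)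
      = C c * X 0 ^ m 0 * X 1 ^ m 1 * X 2 ^ m 2 := by
  rw [monomial_eq, Finsupp.prod_fintype]
  · rw [Fin.prod_univ_three]; ring
  · intro i; exact pow_zero _

lemma sgA_monomial {k : Type*} [Field k] (m : Fin 3 →₀ ℕ) (c : k) :
    sgA (monomial m c) = (-1 : k) ^ (m 0) • monomial m c := by
  rw [monomial_eq3]
  have hneg : (-X 0 : MvPolynomial (Fin 3) k) ^ m 0
      = C ((-1 : k) ^ m 0) * X 0 ^ m 0 := by
    rw [map_pow, ← neg_one_mul, mul_pow]
    congr 1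
    rw [map_neg, map_one]
  simp only [map_mul, map_pow, sgA, aeval_X, aeval_C, algHom_C,
    Matrix.cons_val_zero, Matrix.cons_val_one, Matrix.head_cons,
    Matrix.cons_val_two, Matrix.tail_cons]
  rw [hneg, Algebra.smul_def, algebraMap_eq, map_pow, map_neg, map_one]
  ring

lemma sgA_fixed_mem {k : Type*} [Field k] [CharZero k] {f : MvPolynomial (Fin 3) k}
    (hf : sgA f = f) :
    f ∈ Algebra.adjoin k ({X 0 ^ 2, X 1, X 2} : Set (MvPolynomial (Fin 3) k)) := by
  set A := Algebra.adjoin k ({X 0 ^ 2, X 1, X 2} : Set (MvPolynomial (Fin 3) k)) with hA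
  have hx0 : (X 0 : MvPolynomial (Fin 3) k) ^ 2 ∈ A :=
    Algebra.subset_adjoin (Or.inl rfl)
  have hx1 : (X 1 : MvPolynomial (Fin 3) k) ∈ A :=
    Algebra.subset_adjoin (Or.inr (Or.inl rfl))
  have hx2 : (X 2 : MvPolynomial (Fin 3) k) ∈ A :=
    Algebra.subset_adjoin (Or.inr (Or.inr rfl))
  have key : ∀ g : MvPolynomial (Fin 3) k, g + sgA g ∈ A := by
    intro g
    induction g using MvPolynomial.induction_on' with
    | monomial m c =>
      rw [sgA_monomial]
      rcases Nat.even_or_odd (m 0) with he | ho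
      · have hmem : (monomial m c : MvPolynomial (Fin 3) k) ∈ A := by
          obtain ⟨t, ht⟩ := he
          rw [monomial_eq3]
          have h0 : (X 0 : MvPolynomial (Fin 3) k) ^ m 0 = (X 0 ^ 2) ^ t := by
            rw [← pow_mul]; congr 1; omega
          rw [h0]
          exact mul_mem (mul_mem (mul_mem (A.algebraMap_mem c) (pow_mem hx0 t))
            (pow_mem hx1 _)) (pow_mem hx2 _)
        rw [he.neg_one_pow, one_smul]
        exact add_mem hmem hmem
      · rw [ho.neg_one_pow, neg_one_smul, add_neg_cancel]
        exact A.zero_mem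
    | add p q hp hq =>
      have h' : p + q + sgA (p + q) = (p + sgA p) + (q + sgA q) := by
        rw [map_add]; ring
      rw [h']
      exact add_mem hp hq
  have k2 := key f
  rw [hf] at k2
  have h2 : f = (2⁻¹ : k) • (f + f) := by
    rw [← two_smul k f, smul_smul]; norm_num
  rw [h2]
  exact A.smul_mem k2 _


/-- For the bracket `{x₁,x₂} = 0`, `{x₂,x₃} = 3x₁²`, `{x₃,x₁} = 0` and the graded Poisson
automorphism `φ : x₁ ↦ −x₁, x₂ ↦ a·x₁ + x₂, x₃ ↦ d·x₁ + x₃` with `G = ⟨φ⟩`, the invariant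
subalgebra `P^G` is generated by `y₁ = x₁²`, `y₂ = (a/2)x₁ + x₂`, `y₃ = (d/2)x₁ + x₃`, and
`{y₁,y₂} = 0`, `{y₂,y₃} = 3y₁`, `{y₃,y₁} = 0`. -/
theorem stmt_16 {k : Type*} [Field k] [IsAlgClosed k] [CharZero k] (a d : k)
    (φ : MvPolynomial (Fin 3) k ≃ₐ[k] MvPolynomial (Fin 3) k)
    (hφ0 : φ (X 0) = -X 0)
    (hφ1 : φ (X 1) = C a * X 0 + X 1)
    (hφ2 : φ (X 2) = C d * X 0 + X 2)
    (hbr : ∀ f g, φ (jacBracket 0 (3 * X 0 ^ 2) 0 f g) =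
      jacBracket 0 (3 * X 0 ^ 2) 0 (φ f) (φ g)) :
    {f : MvPolynomial (Fin 3) k | ∀ ψ ∈ Subgroup.zpowers φ, ψ f = f} =
      ↑(Algebra.adjoin k ({X 0 ^ 2, C (a / 2) * X 0 + X 1, C (d / 2) * X 0 + X 2} :
          Set (MvPolynomial (Fin 3) k))) ∧
    jacBracket 0 (3 * X 0 ^ 2) 0 (X 0 ^ 2) (C (a / 2) * X 0 + X 1) = 0 ∧
    jacBracket 0 (3 * X 0 ^ 2) 0 (C (a / 2) * X 0 + X 1) (C (d / 2) * X 0 + X 2) =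
      3 * (X 0 ^ 2) ∧
    jacBracket 0 (3 * X 0 ^ 2) 0 (C (d / 2) * X 0 + X 2) (X 0 ^ 2) = 0 := by
  refine ⟨?_, ?_, ?_, ?_⟩
  · -- the invariant subalgebra
    ext f
    simp only [Set.mem_setOf_eq, SetLike.mem_coe]
    constructor
    · intro hf
      have hφf : φ f = f := hf φ (Subgroup.mem_zpowers φ)
      -- conjugate by TmA
      rw [phi_eq_aux a d φ hφ0 hφ1 hφ2 f] at hφf
      have hTT := DFunLike.congr_fun (TmA'_comp a d) f
      simp only [AlgHom.coe_comp, Function.comp_apply, AlgHom.id_apply] at hTT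
      have hsg : sgA (TmA' a d f) = TmA' a d f := by
        have := congrArg (TmA' a d) hφf
        rwa [show ∀ g, TmA' a d (TmA a d g) = g from
          fun g => by simpa using DFunLike.congr_fun (TmA'_comp a d) g] at this
      have hmem0 := sgA_fixed_mem hsg
      have hfT : f = TmA a d (TmA' a d f) := by
        simpa using (DFunLike.congr_fun (TmA_comp a d) f).symm
      rw [hfT]
      -- map membership through TmA
      have hTmem : ∀ g ∈ Algebra.adjoin k
          ({X 0 ^ 2, X 1, X 2} : Set (MvPolynomial (Fin 3) k)),
          TmA a d g ∈ Algebra.adjoin k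
            ({X 0 ^ 2, C (a / 2) * X 0 + X 1, C (d / 2) * X 0 + X 2} :
              Set (MvPolynomial (Fin 3) k)) := by
        intro g hg
        induction hg using Algebra.adjoin_induction with
        | mem x hx =>
          rcases hx with rfl | rfl | rfl
          · have hT0 : TmA a d ((X 0 : MvPolynomial (Fin 3) k) ^ 2) = X 0 ^ 2 := by
              simp [TmA]
            rw [hT0]
            exact Algebra.subset_adjoin (Or.inl rfl)
          · exact Algebra.subset_adjoin (by simp [TmA])
          · exact Algebra.subset_adjoin (by simp [TmA])
        | algebraMap r => rw [AlgHom.commutes]; exact Subalgebra.algebraMap_mem _ r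
        | add x y _ _ hx hy => rw [map_add]; exact add_mem hx hy
        | mul x y _ _ hx hy => rw [map_mul]; exact mul_mem hx hy
      exact hTmem _ hmem0
    · intro hf ψ hψ
      have hC : ∀ c : k, φ (C c) = C c := fun c => by
        rw [← algebraMap_eq]; exact φ.commutes c
      have hφfix : φ f = f := by
        induction hf using Algebra.adjoin_induction with
        | mem x hx =>
          rcases hx with rfl | rfl | rfl
          · rw [map_pow, hφ0, neg_pow]; simp
          · rw [map_add, map_mul, hφ0, hφ1, hC]
            rw [show (C a : MvPolynomial (Fin 3) k) = C (a/2) + C (a/2) by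
              rw [← C_add, add_halves]]
            ring
          · rw [map_add, map_mul, hφ0, hφ2, hC]
            rw [show (C d : MvPolynomial (Fin 3) k) = C (d/2) + C (d/2) by
              rw [← C_add, add_halves]]
            ring
        | algebraMap r => exact φ.commutes r
        | add x y _ _ hx hy => rw [map_add, hx, hy]
        | mul x y _ _ hx hy => rw [map_mul, hx, hy]
      have hst : φ ∈ MulAction.stabilizer
          (MvPolynomial (Fin 3) k ≃ₐ[k] MvPolynomial (Fin 3) k) f := by
        rw [MulAction.mem_stabilizer_iff]
        exact hφfix
      have := (Subgroup.zpowers_le.mpr hst) hψ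
      rw [MulAction.mem_stabilizer_iff] at this
      exact this
  · simp [jacBracket, pow_two, pderiv_mul, pderiv_X]
  · simp [jacBracket, pow_two, pderiv_mul, pderiv_X]
  · simp [jacBracket, pow_two, pderiv_mul, pderiv_X]
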